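/- Let P ∈ F_2[x_1,...,x_n] be a multilinear polynomial of degree at most d, and let M be the 2^n × 2^n matrix over F_2 with entries M_{x,y} = P(x+y) for x, y ∈ F_2^n. Then the F_2-rank of M is at most 2 Σ_{i=0}^{⌊d/2⌋} C(n,i). -/

import Mathlib

open Finset

lemma clp_rank_add_le {X Y : Type*} [Fintype Y]
    (A B : Matrix X Y (ZMod 2)) : (A + B).rank ≤ A.rank + B.rank := by
  unfold Matrix.rank
  rw [Matrix.mulVecLin_add]
  have h : LinearMap.range (A.mulVecLin + B.mulVecLin) ≤
      LinearMap.range A.mulVecLin ⊔ LinearMap.range B.mulVecLin := by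
    rintro _ ⟨v, rfl⟩
    exact Submodule.add_mem_sup (LinearMap.mem_range_self _ v) (LinearMap.mem_range_self _ v)
  exact (Submodule.finrank_mono h).trans (Submodule.finrank_add_le_finrank_add_finrank _ _)

lemma clp_card_filter (n k : ℕ) :
    (Finset.univ.filter fun S : Finset (Fin n) => S.card ≤ k).card
      = ∑ i ∈ Finset.range (k + 1), n.choose i := by
  classical
  have h : (univ.filter fun S : Finset (Fin n) => S.card ≤ k)
      = (Finset.range (k + 1)).biUnion (fun i => Finset.powersetCard i Finset.univ) := by
    ext S
    simp [Finset.mem_powersetCard_univ, Nat.lt_succ_iff]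
  rw [h, Finset.card_biUnion]
  · refine Finset.sum_congr rfl fun i _ => ?_
    simp [Finset.card_powersetCard]
  · intro a _ b _ hab
    simp only [Finset.disjoint_left, Finset.mem_powersetCard_univ]
    rintro S rfl h2
    exact hab h2

theorem croot_lev_pach (n d : ℕ) (P : MvPolynomial (Fin n) (ZMod 2))
    (hmult : ∀ m ∈ P.support, ∀ i : Fin n, m i ≤ 1)
    (hdeg : P.totalDegree ≤ d)
    (M : Matrix (Fin n → ZMod 2) (Fin n → ZMod 2) (ZMod 2))
    (hM : ∀ x y : Fin n → ZMod 2, M x y = MvPolynomial.eval (x + y) P) :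
    M.rank ≤ 2 * ∑ i ∈ Finset.range (d / 2 + 1), n.choose i := by
  classical
  set d2 := d / 2 with hd2
  let Kfin : Finset (Finset (Fin n)) := Finset.univ.filter fun S => S.card ≤ d2
  have hTd : ∀ m ∈ P.support, m.support.card ≤ d := by
    intro m hm
    have h1 : m.support.card ≤ m.sum fun _ e => e := by
      rw [Finsupp.sum, Finset.card_eq_sum_ones]
      exact Finset.sum_le_sum fun i hi => Nat.one_le_iff_ne_zero.2 (Finsupp.mem_support_iff.1 hi)
    exact h1.trans ((MvPolynomial.le_totalDegree hm).trans hdeg)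
  let F : Matrix (Fin n → ZMod 2) ↥Kfin (ZMod 2) := Matrix.of fun x k => ∏ i ∈ k.1, x i
  let G : Matrix ↥Kfin (Fin n → ZMod 2) (ZMod 2) := Matrix.of fun k y =>
    ∑ m ∈ P.support, if k.1 ⊆ m.support then P.coeff m * ∏ i ∈ m.support \ k.1, y i else 0
  let H : Matrix (Fin n → ZMod 2) ↥Kfin (ZMod 2) := Matrix.of fun x k =>
    ∑ m ∈ P.support,
      if k.1 ⊆ m.support ∧ d2 < (m.support \ k.1).card then
        P.coeff m * ∏ i ∈ m.support \ k.1, x i else 0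
  let F2 : Matrix ↥Kfin (Fin n → ZMod 2) (ZMod 2) := Matrix.of fun k y => ∏ i ∈ k.1, y i
  have key : M = F * G + H * F2 := by
    ext x y
    rw [hM x y, MvPolynomial.eval_eq]
    have hpow : ∀ m ∈ P.support, (∏ i ∈ m.support, (x + y) i ^ m i)
        = ∏ i ∈ m.support, (x i + y i) := by
      intro m hm
      refine Finset.prod_congr rfl fun i hi => ?_
      have h1 : m i = 1 :=
        le_antisymm (hmult m hm i) (Nat.one_le_iff_ne_zero.2 (Finsupp.mem_support_iff.1 hi))
      simp [h1]
    rw [Finset.sum_congr rfl fun m hm => by rw [hpow m hm]]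
    have hFG : (F * G) x y = ∑ m ∈ P.support, ∑ k : ↥Kfin,
        if k.1 ⊆ m.support then
          P.coeff m * ((∏ i ∈ k.1, x i) * ∏ i ∈ m.support \ k.1, y i) else 0 := by
      simp only [Matrix.mul_apply, F, G, Matrix.of_apply, Finset.mul_sum, mul_ite, mul_zero]
      rw [Finset.sum_comm]
      refine Finset.sum_congr rfl fun m _ => Finset.sum_congr rfl fun k _ => ?_
      split <;> ring
    have hHF2 : (H * F2) x y = ∑ m ∈ P.support, ∑ k : ↥Kfin,
        if k.1 ⊆ m.support ∧ d2 < (m.support \ k.1).card then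
          P.coeff m * ((∏ i ∈ m.support \ k.1, x i) * ∏ i ∈ k.1, y i) else 0 := by
      simp only [Matrix.mul_apply, H, F2, Matrix.of_apply, Finset.sum_mul, ite_mul, zero_mul]
      rw [Finset.sum_comm]
      refine Finset.sum_congr rfl fun m _ => Finset.sum_congr rfl fun k _ => ?_
      split <;> ring
    rw [Matrix.add_apply, hFG, hHF2, ← Finset.sum_add_distrib]
    refine Finset.sum_congr rfl fun m hm => ?_
    set T := m.support with hT
    have hTle : T.card ≤ d := hTd m hm
    set c := P.coeff m with hc
    have hA : (∑ k : ↥Kfin, if k.1 ⊆ T then c * ((∏ i ∈ k.1, x i) * ∏ i ∈ T \ k.1, y i) else 0)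
        = ∑ S ∈ Kfin, (if S ⊆ T then c * ((∏ i ∈ S, x i) * ∏ i ∈ T \ S, y i) else 0) :=
      Finset.sum_coe_sort Kfin
        (fun S => if S ⊆ T then c * ((∏ i ∈ S, x i) * ∏ i ∈ T \ S, y i) else 0)
    have hB : (∑ k : ↥Kfin, if k.1 ⊆ T ∧ d2 < (T \ k.1).card then
            c * ((∏ i ∈ T \ k.1, x i) * ∏ i ∈ k.1, y i) else 0)
        = ∑ S ∈ Kfin, (if S ⊆ T ∧ d2 < (T \ S).card then
            c * ((∏ i ∈ T \ S, x i) * ∏ i ∈ S, y i) else 0) :=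
      Finset.sum_coe_sort Kfin
        (fun S => if S ⊆ T ∧ d2 < (T \ S).card then
          c * ((∏ i ∈ T \ S, x i) * ∏ i ∈ S, y i) else 0)
    rw [Finset.prod_add, Finset.mul_sum, hA, hB]
    rw [← Finset.sum_filter, ← Finset.sum_filter]
    have e1 : Kfin.filter (fun S => S ⊆ T) = T.powerset.filter (fun S => S.card ≤ d2) := by
      ext S
      simp only [Kfin, Finset.mem_filter, Finset.mem_univ, Finset.mem_powerset, true_and]
      tauto
    have e2 : Kfin.filter (fun S => S ⊆ T ∧ d2 < (T \ S).card)
        = T.powerset.filter (fun S => d2 < (T \ S).card) := by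
      ext S
      simp only [Kfin, Finset.mem_filter, Finset.mem_univ, Finset.mem_powerset, true_and]
      constructor
      · tauto
      · rintro ⟨h1, h2⟩
        refine ⟨?_, h1, h2⟩
        have hc1 : (T \ S).card = T.card - S.card := Finset.card_sdiff_of_subset h1
        have hc2 : S.card ≤ T.card := Finset.card_le_card h1
        omega
    rw [e1, e2]
    have e3 : (∑ S ∈ T.powerset.filter (fun S => d2 < (T \ S).card),
          c * ((∏ i ∈ T \ S, x i) * ∏ i ∈ S, y i))
        = ∑ S ∈ T.powerset.filter (fun S => ¬ S.card ≤ d2),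
          c * ((∏ i ∈ S, x i) * ∏ i ∈ T \ S, y i) := by
      refine Finset.sum_nbij' (fun S => T \ S) (fun S => T \ S) ?_ ?_ ?_ ?_ ?_
      · intro a ha
        simp only [Finset.mem_filter, Finset.mem_powerset] at ha ⊢
        exact ⟨Finset.sdiff_subset, not_le.2 ha.2⟩
      · intro a ha
        simp only [Finset.mem_filter, Finset.mem_powerset] at ha ⊢
        refine ⟨Finset.sdiff_subset, ?_⟩
        rw [Finset.sdiff_sdiff_eq_self ha.1]
        exact not_le.1 ha.2
      · intro a ha
        simp only [Finset.mem_filter, Finset.mem_powerset] at ha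
        exact Finset.sdiff_sdiff_eq_self ha.1
      · intro a ha
        simp only [Finset.mem_filter, Finset.mem_powerset] at ha
        exact Finset.sdiff_sdiff_eq_self ha.1
      · intro a ha
        simp only [Finset.mem_filter, Finset.mem_powerset] at ha
        simp only [Finset.sdiff_sdiff_eq_self ha.1]
    rw [e3, Finset.sum_filter_add_sum_filter_not]
  rw [key]
  have h1 : (F * G).rank ≤ Fintype.card ↥Kfin :=
    (Matrix.rank_mul_le_left F G).trans (Matrix.rank_le_card_width F)
  have h2 : (H * F2).rank ≤ Fintype.card ↥Kfin :=
    (Matrix.rank_mul_le_left H F2).trans (Matrix.rank_le_card_width H)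
  have hcard : Fintype.card ↥Kfin = ∑ i ∈ Finset.range (d2 + 1), n.choose i := by
    rw [Fintype.card_coe]
    exact clp_card_filter n d2
  calc (F * G + H * F2).rank ≤ (F * G).rank + (H * F2).rank := clp_rank_add_le _ _
    _ ≤ Fintype.card ↥Kfin + Fintype.card ↥Kfin := add_le_add h1 h2
    _ = 2 * ∑ i ∈ Finset.range (d / 2 + 1), n.choose i := by rw [hcard]; ring
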